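/- Let G and H be controllable simple graphs on n vertices with real adjacency matrices A and B and extended walk matrices Ŵ_G = [𝟙, A𝟙, ..., Aⁿ𝟙] and Ŵ_H = [𝟙, B𝟙, ..., Bⁿ𝟙]. If there exists a permutation matrix P with PŴ_G = Ŵ_H, then PAPᵀ = B; in particular G and H are isomorphic. -/
import Mathlib


open Matrix

/-- The walk matrix of a graph with adjacency matrix `A` on `n` vertices. -/
noncomputable def walkMatrix {n : ℕ} (A : Matrix (Fin n) (Fin n) ℝ) :
    Matrix (Fin n) (Fin n) ℝ :=
  Matrix.of fun i j => ((A ^ (j : ℕ)) *ᵥ (1 : Fin n → ℝ)) i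

/-- The extended walk matrix of a graph with adjacency matrix `A` on `n` vertices. -/
noncomputable def extWalkMatrix {n : ℕ} (A : Matrix (Fin n) (Fin n) ℝ) :
    Matrix (Fin n) (Fin (n + 1)) ℝ :=
  Matrix.of fun i j => ((A ^ (j : ℕ)) *ᵥ (1 : Fin n → ℝ)) i

lemma mul_walkMatrix_shift {n : ℕ} (M : Matrix (Fin n) (Fin n) ℝ) :
    M * walkMatrix M = Matrix.of fun i (j : Fin n) =>
      ((M ^ ((j : ℕ) + 1)) *ᵥ (1 : Fin n → ℝ)) i := by
  ext i j
  have : (M * walkMatrix M) i j = (M *ᵥ ((M ^ (j : ℕ)) *ᵥ (1 : Fin n → ℝ))) i := rfl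
  rw [this, Matrix.mulVec_mulVec, ← pow_succ']
  rfl

/-- If two controllable graphs have extended walk matrices equal up to a permutation
of the rows, then the graphs are isomorphic via that permutation. -/
theorem controllable_perm_extWalkMatrix_isomorphic {n : ℕ}
    (G H : SimpleGraph (Fin n)) [DecidableRel G.Adj] [DecidableRel H.Adj]
    (hG : IsUnit (walkMatrix (G.adjMatrix ℝ)))
    (hH : IsUnit (walkMatrix (H.adjMatrix ℝ)))
    (P : Matrix (Fin n) (Fin n) ℝ)
    (hP : ∃ σ : Equiv.Perm (Fin n), P = σ.permMatrix ℝ)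
    (hPW : P * extWalkMatrix (G.adjMatrix ℝ) = extWalkMatrix (H.adjMatrix ℝ)) :
    P * G.adjMatrix ℝ * Pᵀ = H.adjMatrix ℝ ∧ Nonempty (G ≃g H) := by
  obtain ⟨σ, rfl⟩ := hP
  set A := G.adjMatrix ℝ with hA
  set B := H.adjMatrix ℝ with hB
  set P := σ.permMatrix ℝ with hPdef
  have hent : ∀ i j, ∑ k, P i k * extWalkMatrix A k j = extWalkMatrix B i j := by
    intro i j
    have := congrFun (congrFun hPW i) j
    simpa [Matrix.mul_apply] using this
  -- P * W_A = W_B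
  have hW : P * walkMatrix A = walkMatrix B := by
    ext i j
    have := hent i (Fin.castSucc j)
    simpa [Matrix.mul_apply, walkMatrix, extWalkMatrix] using this
  -- P * (A * W_A) = B * W_B
  have h1 : P * (A * walkMatrix A) = (B * P) * walkMatrix A := by
    rw [Matrix.mul_assoc B, hW, mul_walkMatrix_shift A, mul_walkMatrix_shift B]
    ext i j
    have := hent i j.succ
    simpa [Matrix.mul_apply, extWalkMatrix, Fin.val_succ] using this
  haveI := hG.invertible
  have h2 : P * A = B * P := by
    have h3 := congrArg (· * ⅟(walkMatrix A)) h1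
    simpa [Matrix.mul_assoc] using h3
  -- P transpose
  have hPt : Pᵀ = (σ.symm.toPEquiv.toMatrix : Matrix (Fin n) (Fin n) ℝ) := by
    rw [hPdef, Equiv.Perm.permMatrix, ← PEquiv.toMatrix_symm, Equiv.toPEquiv_symm]
  have hPPt : P * Pᵀ = 1 := by
    rw [hPdef, hPt, Equiv.Perm.permMatrix, ← PEquiv.toMatrix_trans,
      ← Equiv.toPEquiv_trans]
    simp
  have hfinal : P * A * Pᵀ = B := by
    rw [h2, Matrix.mul_assoc, hPPt, Matrix.mul_one]
  refine ⟨hfinal, ?_⟩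
  -- entries of P * A * Pᵀ
  have hentry : ∀ i j, B i j = A (σ i) (σ j) := by
    intro i j
    rw [← hfinal, hPt, Matrix.mul_assoc, PEquiv.mul_toMatrix_toPEquiv,
      hPdef, Equiv.Perm.permMatrix, PEquiv.toMatrix_toPEquiv_mul]
    simp
  have hadj : ∀ i j, H.Adj i j ↔ G.Adj (σ i) (σ j) := by
    intro i j
    have := hentry i j
    rw [hA, hB] at this
    simp only [SimpleGraph.adjMatrix_apply] at this
    constructor <;> intro h <;> [skip; skip] <;> by_contra hc <;> simp [h, hc] at this
  exact ⟨⟨σ.symm, by intro a b; simp [hadj]⟩⟩
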